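/- Let ℓ be a positive integer and let m, S satisfy s̄_ℓ < m ≤ S. Then k·μ(m)·ℓ − D(s_in − m) > 0, there exists a finite time T ≥ 0 with φ(ℓ, S, T) = m, and this hitting time satisfies T ≤ (S − m)/(k·μ(m)·ℓ − D(s_in − m)). -/

import Mathlib

/-- For s̄_ℓ < m ≤ S one has k μ(m) ℓ − D(s_in − m) > 0, the flow started at S reaches m
in a finite time T ≥ 0, and T ≤ (S − m)/(k μ(m) ℓ − D(s_in − m)). -/
theorem stmt_19
    (D sIn k : ℝ) (μ : ℝ → ℝ)
    (hD : 0 < D) (hsIn : 0 < sIn) (hk : 0 < k)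
    (hμC1 : ContDiffOn ℝ 1 μ (Set.Ici 0))
    (hμmono : StrictMonoOn μ (Set.Ici 0))
    (hμ0 : μ 0 = 0)
    (hμpos : ∀ s : ℝ, 0 < s → 0 < μ s)
    (sbar : ℕ → ℝ)
    (hsbar_mem : ∀ ℓ : ℕ, 1 ≤ ℓ → sbar ℓ ∈ Set.Ioo 0 sIn)
    (hsbar_eq : ∀ ℓ : ℕ, 1 ≤ ℓ → D * (sIn - sbar ℓ) - k * μ (sbar ℓ) * (ℓ : ℝ) = 0)
    (phi : ℕ → ℝ → ℝ → ℝ)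
    (hphi_init : ∀ ℓ : ℕ, 1 ≤ ℓ → ∀ s₀ : ℝ, 0 ≤ s₀ → phi ℓ s₀ 0 = s₀)
    (hphi_deriv : ∀ ℓ : ℕ, 1 ≤ ℓ → ∀ s₀ : ℝ, 0 ≤ s₀ → ∀ t : ℝ, 0 ≤ t →
      HasDerivWithinAt (phi ℓ s₀)
        (D * (sIn - phi ℓ s₀ t) - k * μ (phi ℓ s₀ t) * (ℓ : ℝ)) (Set.Ici 0) t) :
    ∀ ℓ : ℕ, 1 ≤ ℓ → ∀ m S : ℝ, sbar ℓ < m → m ≤ S →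
      0 < k * μ m * (ℓ : ℝ) - D * (sIn - m) ∧
      ∃ T : ℝ, 0 ≤ T ∧ phi ℓ S T = m ∧
        T ≤ (S - m) / (k * μ m * (ℓ : ℝ) - D * (sIn - m)) := by
  intro ℓ hℓ m S hm hmS
  obtain ⟨hsb0, hsbin⟩ := hsbar_mem ℓ hℓ
  have hm0 : (0:ℝ) < m := hsb0.trans hm
  have hS0 : (0:ℝ) ≤ S := (hm0.trans_le hmS).le
  have hℓ0 : (0:ℝ) < (ℓ:ℝ) := by exact_mod_cast hℓ
  -- positivity of c
  have hμlt : μ (sbar ℓ) < μ m := hμmono hsb0.le hm0.le hm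
  have hc : 0 < k * μ m * (ℓ : ℝ) - D * (sIn - m) := by
    have h0 := hsbar_eq ℓ hℓ
    have h1 : 0 < k * (μ m - μ (sbar ℓ)) * (ℓ:ℝ) :=
      mul_pos (mul_pos hk (sub_pos.2 hμlt)) hℓ0
    nlinarith [mul_lt_mul_of_pos_left hm hD]
  refine ⟨hc, ?_⟩
  set c := k * μ m * (ℓ : ℝ) - D * (sIn - m) with hcdef
  set T0 := (S - m) / c with hT0def
  have hT0 : 0 ≤ T0 := div_nonneg (by linarith) hc.le
  -- continuity of phi on Icc 0 T0
  have hcont : ContinuousOn (phi ℓ S) (Set.Icc 0 T0) := by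
    intro t ht
    exact ((hphi_deriv ℓ hℓ S hS0 t ht.1).continuousWithinAt).mono
      (fun x hx => hx.1)
  by_cases hB : ∃ t ∈ Set.Icc (0:ℝ) T0, phi ℓ S t ≤ m
  · obtain ⟨t, ht, hφt⟩ := hB
    have hφ0 : phi ℓ S 0 = S := hphi_init ℓ hℓ S hS0
    have hcont' : ContinuousOn (phi ℓ S) (Set.Icc 0 t) :=
      hcont.mono (Set.Icc_subset_Icc le_rfl ht.2)
    have : m ∈ Set.Icc (phi ℓ S t) (phi ℓ S 0) := ⟨hφt, by rw [hφ0]; exact hmS⟩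
    obtain ⟨T, hT, hTeq⟩ := intermediate_value_Icc' ht.1 hcont' this
    exact ⟨T, hT.1, hTeq, hT.2.trans ht.2⟩
  · push_neg at hB
    exfalso
    -- on [0,T0], phi > m, so phi + c t is antitone
    have hanti : AntitoneOn (fun t => phi ℓ S t + c * t) (Set.Icc 0 T0) := by
      apply antitoneOn_of_hasDerivWithinAt_nonpos (convex_Icc 0 T0)
        (f' := fun t => (D * (sIn - phi ℓ S t) - k * μ (phi ℓ S t) * (ℓ : ℝ)) + c)
      · exact hcont.add (continuousOn_const.mul continuousOn_id)
      · intro x hx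
        rw [interior_Icc] at hx
        have hder : HasDerivWithinAt (phi ℓ S)
            (D * (sIn - phi ℓ S x) - k * μ (phi ℓ S x) * (ℓ : ℝ))
            (interior (Set.Icc 0 T0)) x :=
          (hphi_deriv ℓ hℓ S hS0 x hx.1.le).mono
            (by rw [interior_Icc]; exact fun y hy => hy.1.le)
        have : HasDerivWithinAt (fun t => c * t) c (interior (Set.Icc 0 T0)) x :=
          by simpa using ((hasDerivAt_id x).const_mul c).hasDerivWithinAt
        exact hder.add this
      · intro x hx
        rw [interior_Icc] at hx
        have hφx : m < phi ℓ S x := hB x ⟨hx.1.le, hx.2.le⟩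
        have hμle : μ m ≤ μ (phi ℓ S x) :=
          (hμmono hm0.le (hm0.trans hφx).le hφx).le
        have : k * μ m * (ℓ:ℝ) ≤ k * μ (phi ℓ S x) * (ℓ:ℝ) := by
          nlinarith [mul_nonneg (mul_nonneg hk.le (sub_nonneg.2 hμle)) hℓ0.le]
        have h2 : D * (sIn - phi ℓ S x) ≤ D * (sIn - m) := by nlinarith
        simp only [hcdef]; linarith
    have hle := hanti (Set.left_mem_Icc.2 hT0) (Set.right_mem_Icc.2 hT0) hT0
    have hφ0 : phi ℓ S 0 = S := hphi_init ℓ hℓ S hS0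
    have hcT0 : c * T0 = S - m := by
      rw [hT0def]; field_simp
    have hend : m < phi ℓ S T0 := hB T0 ⟨hT0, le_rfl⟩
    simp only [hφ0, mul_zero, add_zero] at hle
    linarith
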